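/- Let the 6 edges of a 4-cycle u–v–w–x–u together with pendant edges vv' and xx' (in a (2,3)-bipartite graph where u,w have degree 2) be given lists with |L(vv')| ≥ 3, |L(xx')| ≥ 3, |L(uv)|, |L(vw)|, |L(wx)|, |L(xu)| ≥ 5, where any two of these six edges conflict (are adjacent or joined by an edge) except the pair vv', xx'. Then there is a strong edge-coloring of these 6 edges from the lists. -/

import Mathlib

private lemma pick_avoid (s t : Finset ℕ) (h : t.card < s.card) :
    ∃ x ∈ s, x ∉ t := by
  by_contra h'
  push_neg at h'
  exact absurd (Finset.card_le_card fun x hx => h' x hx) (by omega)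

private lemma card4 (w x y z : ℕ) : ({w, x, y, z} : Finset ℕ).card ≤ 4 := by
  have h1 := Finset.card_insert_le w ({x, y, z} : Finset ℕ)
  have h2 := Finset.card_insert_le x ({y, z} : Finset ℕ)
  have h3 := Finset.card_insert_le y ({z} : Finset ℕ)
  have h4 : ({z} : Finset ℕ).card = 1 := Finset.card_singleton z
  omega

private lemma card3 (x y z : ℕ) : ({x, y, z} : Finset ℕ).card ≤ 3 := by
  have h2 := Finset.card_insert_le x ({y, z} : Finset ℕ)
  have h3 := Finset.card_insert_le y ({z} : Finset ℕ)
  have h4 : ({z} : Finset ℕ).card = 1 := Finset.card_singleton z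
  omega

private lemma card2 (y z : ℕ) : ({y, z} : Finset ℕ).card ≤ 2 := by
  have h3 := Finset.card_insert_le y ({z} : Finset ℕ)
  have h4 : ({z} : Finset ℕ).card = 1 := Finset.card_singleton z
  omega

/-- The 4-cycle `u-v-w-x-u` with pendant edges `vv'` and `xx'`: every pair of
the six edges conflicts for strong edge-coloring except the pair `{vv', xx'}`.
Given the stated list sizes, a strong edge-coloring from the lists exists. -/
theorem four_cycle_configuration_colorable
    (Lvv' Lxx' Luv Lvw Lwx Lxu : Finset ℕ)
    (hvv' : 3 ≤ Lvv'.card) (hxx' : 3 ≤ Lxx'.card)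
    (huv : 5 ≤ Luv.card) (hvw : 5 ≤ Lvw.card)
    (hwx : 5 ≤ Lwx.card) (hxu : 5 ≤ Lxu.card) :
    ∃ p ∈ Lvv', ∃ q ∈ Lxx', ∃ a ∈ Luv, ∃ b ∈ Lvw, ∃ c ∈ Lwx, ∃ d ∈ Lxu,
      a ≠ b ∧ a ≠ c ∧ a ≠ d ∧ b ≠ c ∧ b ≠ d ∧ c ≠ d ∧
      p ≠ a ∧ p ≠ b ∧ p ≠ c ∧ p ≠ d ∧
      q ≠ a ∧ q ≠ b ∧ q ≠ c ∧ q ≠ d := by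
  by_cases hint : (Lvv' ∩ Lxx').Nonempty
  · -- shared color for both pendant edges
    obtain ⟨p, hp⟩ := hint
    rw [Finset.mem_inter] at hp
    obtain ⟨a, ha, ha'⟩ := pick_avoid Luv {p} (by simp; omega)
    obtain ⟨b, hb, hb'⟩ := pick_avoid Lvw {p, a} (by have := card2 p a; omega)
    obtain ⟨c, hc, hc'⟩ := pick_avoid Lwx {p, a, b} (by have := card3 p a b; omega)
    obtain ⟨d, hd, hd'⟩ := pick_avoid Lxu {p, a, b, c} (by have := card4 p a b c; omega)
    simp only [Finset.mem_insert, Finset.mem_singleton, not_or] at ha' hb' hc' hd'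
    exact ⟨p, hp.1, p, hp.2, a, ha, b, hb, c, hc, d, hd, by tauto⟩
  · -- the pendant lists are disjoint
    rw [Finset.not_nonempty_iff_eq_empty] at hint
    obtain ⟨A, hA, hAcard⟩ := Finset.exists_subset_card_eq hvv'
    obtain ⟨B, hB, hBcard⟩ := Finset.exists_subset_card_eq hxx'
    obtain ⟨W, hW, hWcard⟩ := Finset.exists_subset_card_eq hwx
    have hdisj : Disjoint A B := by
      rw [Finset.disjoint_left]
      intro z hzA hzB
      have : z ∈ Lvv' ∩ Lxx' := Finset.mem_inter.mpr ⟨hA hzA, hB hzB⟩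
      simp [hint] at this
    have hUcard : (A ∪ B).card = 6 := by
      rw [Finset.card_union_of_disjoint hdisj, hAcard, hBcard]
    obtain ⟨z, hz, hzW⟩ := pick_avoid (A ∪ B) W (by omega)
    rw [Finset.mem_union] at hz
    rcases hz with hzA | hzB
    · -- z ∈ Lvv' : use it as p, color Lwx last
      obtain ⟨q, hq⟩ := Finset.card_pos.mp (by omega : 0 < Lxx'.card)
      obtain ⟨a, ha, ha'⟩ := pick_avoid Luv {z, q} (by have := card2 z q; omega)
      obtain ⟨b, hb, hb'⟩ := pick_avoid Lvw {z, q, a} (by have := card3 z q a; omega)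
      obtain ⟨d, hd, hd'⟩ := pick_avoid Lxu {z, q, a, b} (by have := card4 z q a b; omega)
      obtain ⟨c, hc, hc'⟩ := pick_avoid W {q, a, b, d} (by have := card4 q a b d; omega)
      have hcz : c ≠ z := fun h => hzW (h ▸ hc)
      simp only [Finset.mem_insert, Finset.mem_singleton, not_or] at ha' hb' hc' hd'
      exact ⟨z, hA hzA, q, hq, a, ha, b, hb, c, hW hc, d, hd, by tauto⟩
    · -- z ∈ Lxx' : use it as q, color Lwx last
      obtain ⟨p, hp⟩ := Finset.card_pos.mp (by omega : 0 < Lvv'.card)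
      obtain ⟨a, ha, ha'⟩ := pick_avoid Luv {p, z} (by have := card2 p z; omega)
      obtain ⟨b, hb, hb'⟩ := pick_avoid Lvw {p, z, a} (by have := card3 p z a; omega)
      obtain ⟨d, hd, hd'⟩ := pick_avoid Lxu {p, z, a, b} (by have := card4 p z a b; omega)
      obtain ⟨c, hc, hc'⟩ := pick_avoid W {p, a, b, d} (by have := card4 p a b d; omega)
      have hcz : c ≠ z := fun h => hzW (h ▸ hc)
      simp only [Finset.mem_insert, Finset.mem_singleton, not_or] at ha' hb' hc' hd'
      exact ⟨p, hp, z, hB hzB, a, ha, b, hb, c, hW hc, d, hd, by tauto⟩
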